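/- Let d ≥ 1, h > 0, and let θ₀, θ₁, θ₂ satisfy condition C1 or condition C2. Define Q*(r) = (exp(−‖r‖²/(2h²)) / (h√(2π))^{d}) · [ θ₀ − (θ₁/h²)(‖r‖²/h² − d) + (θ₂/h⁴)(‖r‖⁴/h⁴ − 2(d+2)‖r‖²/h² + d(d+2)) ] for r ∈ ℝᵈ. Then for every N ∈ ℕ, every choice of points s₁, …, s_N ∈ ℝᵈ and every vector x ∈ ℝᴺ, the quadratic form Σ_{n=1}^{N} Σ_{m=1}^{N} xₙ x_m Q*(sₙ − s_m) is nonnegative; that is, the N × N precision matrix with entries Q*(sₙ − s_m) is positive semidefinite. -/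

import Mathlib

/-- The explicit SPH-LAP2 precision function equipped with the Gaussian
smoothing kernel of bandwidth `h`. -/
noncomputable def QstarGauss (d : ℕ) (h θ₀ θ₁ θ₂ : ℝ)
    (r : EuclideanSpace ℝ (Fin d)) : ℝ :=
  (Real.exp (-‖r‖ ^ 2 / (2 * h ^ 2)) / (h * Real.sqrt (2 * Real.pi)) ^ d) *
    (θ₀ - (θ₁ / h ^ 2) * (‖r‖ ^ 2 / h ^ 2 - d)
      + (θ₂ / h ^ 4) * (‖r‖ ^ 4 / h ^ 4 - 2 * ((d : ℝ) + 2) * ‖r‖ ^ 2 / h ^ 2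
          + d * ((d : ℝ) + 2)))

open MeasureTheory Real Filter Complex Topology

noncomputable section

local notation "E" d => EuclideanSpace ℝ (Fin d)

/-- Elementary bound: `t^m * exp(-b t²) ≤ C * exp(-(b/2) t²)`. -/
lemma pow_mul_exp_bound (m : ℕ) {b : ℝ} (hb : 0 < b) {t : ℝ} (ht : 0 ≤ t) :
    t ^ m * rexp (-b * t ^ 2) ≤
      (1 + m.factorial * (2 / b) ^ m) * rexp (-(b / 2) * t ^ 2) := by
  have h1 : t ^ m ≤ 1 + t ^ (2 * m) := by
    rcases le_or_gt t 1 with h | h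
    · have := pow_le_one₀ ht h (n := m); linarith [pow_nonneg ht (2*m)]
    · have : t ^ m ≤ t ^ (2 * m) := pow_le_pow_right₀ h.le (by omega)
      linarith
  have h2 : t ^ (2 * m) ≤ m.factorial * (2 / b) ^ m * rexp (b / 2 * t ^ 2) := by
    have hx : (0:ℝ) ≤ b / 2 * t ^ 2 := by positivity
    have := Real.pow_div_factorial_le_exp _ hx m
    rw [div_le_iff₀ (by positivity : (0:ℝ) < (m.factorial : ℝ))] at this
    have hexp : (b / 2 * t ^ 2) ^ m = (b / 2) ^ m * t ^ (2 * m) := by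
      rw [mul_pow, ← pow_mul]
    rw [hexp] at this
    have hb2 : (0:ℝ) < (b / 2) ^ m := by positivity
    have h4 : ((2:ℝ)/b) ^ m * ((b/2) ^ m * t ^ (2*m)) ≤ (2/b) ^ m * (rexp (b / 2 * t ^ 2) * m.factorial) := by
      apply mul_le_mul_of_nonneg_left this (by positivity)
    have h5 : ((2:ℝ)/b) ^ m * (b/2) ^ m = 1 := by
      rw [← mul_pow]; rw [show (2:ℝ)/b * (b/2) = 1 by field_simp]; simp
    calc t ^ (2*m) = ((2:ℝ)/b) ^ m * (b/2) ^ m * t ^ (2*m) := by rw [h5]; ring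
      _ ≤ (2/b) ^ m * (rexp (b / 2 * t ^ 2) * m.factorial) := by rw [mul_assoc]; exact h4
      _ = m.factorial * (2 / b) ^ m * rexp (b / 2 * t ^ 2) := by ring
  have hE : rexp (-b * t ^ 2) = rexp (-(b/2) * t^2) * rexp (-(b/2) * t^2) := by
    rw [← Real.exp_add]; ring_nf
  have hE2 : rexp (b/2 * t ^ 2) * rexp (-b * t^2) = rexp (-(b/2) * t^2) := by
    rw [← Real.exp_add]; ring_nf
  have hme : (0:ℝ) ≤ rexp (-b * t^2) := (Real.exp_pos _).le
  calc t ^ m * rexp (-b * t ^ 2) ≤ (1 + t ^ (2*m)) * rexp (-b * t^2) := by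
        apply mul_le_mul_of_nonneg_right h1 hme
    _ ≤ rexp (-b * t^2) + (m.factorial * (2 / b) ^ m * rexp (b / 2 * t ^ 2)) * rexp (-b*t^2) := by
        rw [add_mul, one_mul]
        gcongr
    _ ≤ (1 + m.factorial * (2 / b) ^ m) * rexp (-(b / 2) * t ^ 2) := by
        rw [mul_assoc, hE2, add_mul, one_mul]
        gcongr
        nlinarith [sq_nonneg t]

lemma re_exponent (b : ℝ) (t c : ℝ) :
    (-(b : ℂ) * (t : ℂ) ^ 2 + Complex.I * (c : ℂ)).re = -b * t ^ 2 := by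
  have : (-(b : ℂ) * (t : ℂ) ^ 2 + Complex.I * (c : ℂ)) = (((-b * t ^ 2 : ℝ) : ℂ) + Complex.I * (c : ℂ)) := by
    push_cast; ring
  rw [this, Complex.add_re, Complex.ofReal_re]
  simp [Complex.mul_re]

lemma norm_cexp_exponent (b : ℝ) (t c : ℝ) :
    ‖Complex.exp (-(b : ℂ) * (t : ℂ) ^ 2 + Complex.I * (c : ℂ))‖ = rexp (-b * t ^ 2) := by
  rw [Complex.norm_exp, re_exponent]

lemma continuous_exponent (d : ℕ) (b : ℝ) (w : EuclideanSpace ℝ (Fin d)) :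
    Continuous (fun k : EuclideanSpace ℝ (Fin d) =>
      Complex.exp (-(b : ℂ) * (‖k‖ : ℂ) ^ 2 + Complex.I * ((inner ℝ w k : ℝ) : ℂ))) := by
  apply Complex.continuous_exp.comp
  apply Continuous.add
  · exact continuous_const.mul ((Complex.continuous_ofReal.comp continuous_norm).pow 2)
  · exact continuous_const.mul (Complex.continuous_ofReal.comp
      (Continuous.inner continuous_const continuous_id))

/-- Gaussian integrability on Euclidean space. -/
lemma integrable_gauss (d : ℕ) {b : ℝ} (hb : 0 < b) :
    Integrable (fun k : EuclideanSpace ℝ (Fin d) => rexp (-b * ‖k‖ ^ 2)) := by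
  have h := (GaussianFourier.integrable_cexp_neg_mul_sq_norm_add
      (V := EuclideanSpace ℝ (Fin d)) (b := (b : ℂ)) (by simpa using hb) Complex.I 0).norm
  refine h.congr ?_
  filter_upwards with k
  rw [norm_cexp_exponent b ‖k‖ (inner ℝ (0 : EuclideanSpace ℝ (Fin d)) k : ℝ)]

lemma integrable_pow_gauss (d m : ℕ) {b : ℝ} (hb : 0 < b) :
    Integrable (fun k : EuclideanSpace ℝ (Fin d) => ‖k‖ ^ m * rexp (-b * ‖k‖ ^ 2)) := by
  refine ((integrable_gauss d (half_pos hb)).const_mul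
      (1 + m.factorial * (2 / b) ^ m)).mono' ?_ ?_
  · exact ((continuous_norm.pow m).mul
      (Real.continuous_exp.comp (by fun_prop))).aestronglyMeasurable
  · filter_upwards with k
    rw [Real.norm_eq_abs,
      _root_.abs_of_nonneg (mul_nonneg (pow_nonneg (norm_nonneg k) m) (Real.exp_pos _).le)]
    exact pow_mul_exp_bound m hb (norm_nonneg k)

lemma integrable_pow_cexp (d m : ℕ) {b : ℝ} (hb : 0 < b) (w : EuclideanSpace ℝ (Fin d)) :
    Integrable (fun k : EuclideanSpace ℝ (Fin d) =>
      (‖k‖ ^ m : ℂ) * Complex.exp (-(b : ℂ) * ‖k‖ ^ 2 + Complex.I * ((inner ℝ w k : ℝ) : ℂ))) := by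
  refine (integrable_pow_gauss d m hb).mono' ?_ ?_
  · exact (((Complex.continuous_ofReal.comp continuous_norm).pow m).mul
      (continuous_exponent d b w)).aestronglyMeasurable
  · filter_upwards with k
    rw [norm_mul, norm_cexp_exponent b ‖k‖ (inner ℝ w k : ℝ)]
    have h1 : ‖((‖k‖ : ℂ)) ^ m‖ = ‖k‖ ^ m := by
      rw [norm_pow, Complex.norm_real, Real.norm_eq_abs, _root_.abs_of_nonneg (norm_nonneg k)]
    rw [h1]

lemma hasDerivAt_integrand (m : ℕ) (t c : ℝ) (β : ℝ) :
    HasDerivAt (fun β : ℝ =>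
        ((t : ℂ) ^ m) * Complex.exp (-(β : ℂ) * (t : ℂ) ^ 2 + Complex.I * (c : ℂ)))
      (-((t : ℂ) ^ (m + 2) * Complex.exp (-(β : ℂ) * (t : ℂ) ^ 2 + Complex.I * (c : ℂ)))) β := by
  have h1 : HasDerivAt (fun z : ℂ =>
      (t : ℂ) ^ m * Complex.exp (-z * (t : ℂ) ^ 2 + Complex.I * (c : ℂ)))
      ((t : ℂ) ^ m *
        (Complex.exp (-(β : ℂ) * (t : ℂ) ^ 2 + Complex.I * (c : ℂ)) * (-(t : ℂ) ^ 2)))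
      ((β : ℝ) : ℂ) := by
    have hz : HasDerivAt (fun z : ℂ => -z * (t : ℂ) ^ 2 + Complex.I * (c : ℂ))
        (-(t : ℂ) ^ 2) ((β : ℝ) : ℂ) := by
      simpa using (((hasDerivAt_id (((β : ℝ)) : ℂ)).neg.mul_const ((t : ℂ) ^ 2)).add_const
        (Complex.I * (c : ℂ)))
    exact (hz.cexp).const_mul _
  have h2 := h1.comp_ofReal
  convert h2 using 1
  rw [pow_add]; ring

lemma hasDerivAt_param_integral (d m : ℕ) (w : EuclideanSpace ℝ (Fin d)) {b : ℝ} (hb : 0 < b) :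
    HasDerivAt (fun β : ℝ => ∫ k : EuclideanSpace ℝ (Fin d),
        (‖k‖ ^ m : ℂ) * Complex.exp (-(β : ℂ) * ‖k‖ ^ 2 + Complex.I * ((inner ℝ w k : ℝ) : ℂ)))
      (-∫ k : EuclideanSpace ℝ (Fin d),
        (‖k‖ ^ (m + 2) : ℂ) *
          Complex.exp (-(b : ℂ) * ‖k‖ ^ 2 + Complex.I * ((inner ℝ w k : ℝ) : ℂ))) b := by
  have h := hasDerivAt_integral_of_dominated_loc_of_deriv_le (μ := volume) (𝕜 := ℝ)
    (F := fun (β : ℝ) (k : EuclideanSpace ℝ (Fin d)) =>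
      (‖k‖ ^ m : ℂ) * Complex.exp (-(β : ℂ) * ‖k‖ ^ 2 + Complex.I * ((inner ℝ w k : ℝ) : ℂ)))
    (F' := fun (β : ℝ) (k : EuclideanSpace ℝ (Fin d)) =>
      -((‖k‖ ^ (m + 2) : ℂ) *
        Complex.exp (-(β : ℂ) * ‖k‖ ^ 2 + Complex.I * ((inner ℝ w k : ℝ) : ℂ))))
    (x₀ := b) (s := Metric.ball b (b / 2))
    (bound := fun k => ‖k‖ ^ (m + 2) * rexp (-(b / 2) * ‖k‖ ^ 2))
    (Metric.ball_mem_nhds b (half_pos hb)) ?_ (integrable_pow_cexp d m hb w) ?_ ?_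
    (integrable_pow_gauss d (m + 2) (half_pos hb)) ?_
  · rw [← integral_neg]
    exact h.2
  · filter_upwards with β
    exact (((Complex.continuous_ofReal.comp continuous_norm).pow m).mul
      (continuous_exponent d β w)).aestronglyMeasurable
  · exact ((integrable_pow_cexp d (m + 2) hb w).neg).aestronglyMeasurable
  · filter_upwards with k
    intro β hβ
    have hβ2 : b / 2 ≤ β := by
      rw [Metric.mem_ball, Real.dist_eq, abs_lt] at hβ
      linarith
    rw [norm_neg, norm_mul, norm_cexp_exponent β ‖k‖ (inner ℝ w k : ℝ)]
    have h1 : ‖((‖k‖ : ℂ)) ^ (m + 2)‖ = ‖k‖ ^ (m + 2) := by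
      rw [norm_pow, Complex.norm_real, Real.norm_eq_abs, _root_.abs_of_nonneg (norm_nonneg k)]
    rw [h1]
    apply mul_le_mul_of_nonneg_left _ (pow_nonneg (norm_nonneg k) _)
    apply Real.exp_le_exp.2
    nlinarith [sq_nonneg ‖k‖]
  · filter_upwards with k
    intro β _
    exact hasDerivAt_integrand m ‖k‖ (inner ℝ w k : ℝ) β

/-- The closed form of the Gaussian integral with oscillation, as a function of `β`. -/
def gfun (d : ℕ) (A : ℝ) (β : ℝ) : ℝ := (π / β) ^ ((d : ℝ) / 2) * rexp (-(A / β))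

lemma M0 (d : ℕ) (w : EuclideanSpace ℝ (Fin d)) {b : ℝ} (hb : 0 < b) :
    ∫ k : EuclideanSpace ℝ (Fin d),
        Complex.exp (-(b : ℂ) * ‖k‖ ^ 2 + Complex.I * ((inner ℝ w k : ℝ) : ℂ))
      = ((gfun d (‖w‖ ^ 2 / 4) b : ℝ) : ℂ) := by
  have h := GaussianFourier.integral_cexp_neg_mul_sq_norm_add
    (V := EuclideanSpace ℝ (Fin d)) (b := (b : ℂ)) (by simpa using hb) Complex.I w
  rw [h, finrank_euclideanSpace_fin]
  have hπb : (0:ℝ) ≤ π / b := (div_pos pi_pos hb).le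
  have e1 : (π / (b : ℂ)) ^ ((d : ℂ) / 2) = (((π / b) ^ ((d : ℝ) / 2) : ℝ) : ℂ) := by
    rw [Complex.ofReal_cpow hπb]
    push_cast
    ring_nf
  have e2 : Complex.exp (Complex.I ^ 2 * ((‖w‖ : ℂ)) ^ 2 / (4 * (b : ℂ)))
      = ((rexp (-(‖w‖ ^ 2 / 4 / b)) : ℝ) : ℂ) := by
    rw [Complex.ofReal_exp]
    congr 1
    rw [Complex.I_sq]
    push_cast
    field_simp
  rw [e1, e2, gfun]
  push_cast
  ring

lemma hasDerivAt_gfun (d : ℕ) (A : ℝ) {b : ℝ} (hb : 0 < b) :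
    HasDerivAt (gfun d A)
      (gfun d A b * (-((d : ℝ) / 2 * b⁻¹) + A * (b ^ 2)⁻¹)) b := by
  have hπb : 0 < π / b := div_pos pi_pos hb
  have h1 : HasDerivAt (fun β : ℝ => π / β) (-(π / b ^ 2)) b := by
    simpa [div_eq_mul_inv, mul_neg] using (hasDerivAt_inv hb.ne').const_mul π
  have h2 : HasDerivAt (fun β : ℝ => (π / β) ^ ((d : ℝ) / 2))
      (((d : ℝ) / 2 * (π / b) ^ ((d : ℝ) / 2 - 1)) * -(π / b ^ 2)) b :=
    (Real.hasDerivAt_rpow_const (Or.inl hπb.ne')).comp b h1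
  have h3 : HasDerivAt (fun β : ℝ => -(A / β)) (A * (b ^ 2)⁻¹) b := by
    simpa [div_eq_mul_inv, neg_mul, mul_comm] using (hasDerivAt_inv hb.ne').const_mul (-A)
  have h5 := h2.mul h3.exp
  have hrw : (π / b) ^ ((d : ℝ) / 2 - 1) = (π / b) ^ ((d : ℝ) / 2) / (π / b) := by
    rw [Real.rpow_sub hπb, Real.rpow_one]
  refine h5.congr_deriv ?_
  rw [hrw, gfun]
  field_simp

lemma M2 (d : ℕ) (w : EuclideanSpace ℝ (Fin d)) {b : ℝ} (hb : 0 < b) :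
    ∫ k : EuclideanSpace ℝ (Fin d),
        (‖k‖ ^ 2 : ℂ) * Complex.exp (-(b : ℂ) * ‖k‖ ^ 2 + Complex.I * ((inner ℝ w k : ℝ) : ℂ))
      = ((gfun d (‖w‖ ^ 2 / 4) b *
          ((d : ℝ) / 2 * b⁻¹ - (‖w‖ ^ 2 / 4) * (b ^ 2)⁻¹) : ℝ) : ℂ) := by
  set A := ‖w‖ ^ 2 / 4 with hA
  have hphi : HasDerivAt (fun β : ℝ => ∫ k : EuclideanSpace ℝ (Fin d),
      Complex.exp (-(β : ℂ) * ‖k‖ ^ 2 + Complex.I * ((inner ℝ w k : ℝ) : ℂ)))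
      (-∫ k : EuclideanSpace ℝ (Fin d),
        (‖k‖ ^ 2 : ℂ) *
          Complex.exp (-(b : ℂ) * ‖k‖ ^ 2 + Complex.I * ((inner ℝ w k : ℝ) : ℂ))) b := by
    have := hasDerivAt_param_integral d 0 w hb
    simpa using this
  have heq : (fun β : ℝ => ((gfun d A β : ℝ) : ℂ)) =ᶠ[𝓝 b]
      (fun β : ℝ => ∫ k : EuclideanSpace ℝ (Fin d),
        Complex.exp (-(β : ℂ) * ‖k‖ ^ 2 + Complex.I * ((inner ℝ w k : ℝ) : ℂ))) := by
    filter_upwards [Ioi_mem_nhds hb] with β hβ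
    exact (M0 d w hβ).symm
  have h1 := hphi.congr_of_eventuallyEq heq
  have h2 := (hasDerivAt_gfun d A hb).ofReal_comp
  have h3 := h1.unique h2
  have h4 : (∫ k : EuclideanSpace ℝ (Fin d),
      (‖k‖ ^ 2 : ℂ) * Complex.exp (-(b : ℂ) * ‖k‖ ^ 2 + Complex.I * ((inner ℝ w k : ℝ) : ℂ)))
      = -(((gfun d A b * (-((d : ℝ) / 2 * b⁻¹) + A * (b ^ 2)⁻¹) : ℝ)) : ℂ) := by
    rw [← h3]; ring
  rw [h4]
  push_cast
  ring

lemma M4 (d : ℕ) (w : EuclideanSpace ℝ (Fin d)) {b : ℝ} (hb : 0 < b) :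
    ∫ k : EuclideanSpace ℝ (Fin d),
        (‖k‖ ^ 4 : ℂ) * Complex.exp (-(b : ℂ) * ‖k‖ ^ 2 + Complex.I * ((inner ℝ w k : ℝ) : ℂ))
      = ((gfun d (‖w‖ ^ 2 / 4) b *
          (((d : ℝ) / 2 * b⁻¹ - (‖w‖ ^ 2 / 4) * (b ^ 2)⁻¹) ^ 2
            + (d : ℝ) / 2 * (b ^ 2)⁻¹ - 2 * (‖w‖ ^ 2 / 4) * (b ^ 3)⁻¹) : ℝ) : ℂ) := by
  set A := ‖w‖ ^ 2 / 4 with hA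
  have hpsi : HasDerivAt (fun β : ℝ => ∫ k : EuclideanSpace ℝ (Fin d),
      (‖k‖ ^ 2 : ℂ) * Complex.exp (-(β : ℂ) * ‖k‖ ^ 2 + Complex.I * ((inner ℝ w k : ℝ) : ℂ)))
      (-∫ k : EuclideanSpace ℝ (Fin d),
        (‖k‖ ^ 4 : ℂ) *
          Complex.exp (-(b : ℂ) * ‖k‖ ^ 2 + Complex.I * ((inner ℝ w k : ℝ) : ℂ))) b := by
    have := hasDerivAt_param_integral d 2 w hb
    simpa using this
  have hq : HasDerivAt (fun β : ℝ => (d : ℝ) / 2 * β⁻¹ - A * (β ^ 2)⁻¹)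
      ((d : ℝ) / 2 * -(b ^ 2)⁻¹ - A * (-(2 * b ^ 1) / (b ^ 2) ^ 2)) b := by
    exact ((hasDerivAt_inv hb.ne').const_mul ((d : ℝ) / 2)).sub
      (((hasDerivAt_pow 2 b).inv (pow_ne_zero 2 hb.ne')).const_mul A)
  have hg1 := (hasDerivAt_gfun d A hb).mul hq
  have heq : (fun β : ℝ => ((gfun d A β * ((d : ℝ) / 2 * β⁻¹ - A * (β ^ 2)⁻¹) : ℝ) : ℂ))
      =ᶠ[𝓝 b] (fun β : ℝ => ∫ k : EuclideanSpace ℝ (Fin d),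
        (‖k‖ ^ 2 : ℂ) *
          Complex.exp (-(β : ℂ) * ‖k‖ ^ 2 + Complex.I * ((inner ℝ w k : ℝ) : ℂ))) := by
    filter_upwards [Ioi_mem_nhds hb] with β hβ
    exact (M2 d w hβ).symm
  have h1 := hpsi.congr_of_eventuallyEq heq
  have h2 := hg1.ofReal_comp
  have h3 := h1.unique h2
  have h4 : (∫ k : EuclideanSpace ℝ (Fin d),
      (‖k‖ ^ 4 : ℂ) * Complex.exp (-(b : ℂ) * ‖k‖ ^ 2 + Complex.I * ((inner ℝ w k : ℝ) : ℂ)))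
      = -((((gfun d A b * (-((d : ℝ) / 2 * b⁻¹) + A * (b ^ 2)⁻¹)) *
            ((d : ℝ) / 2 * b⁻¹ - A * (b ^ 2)⁻¹)
          + gfun d A b *
            ((d : ℝ) / 2 * -(b ^ 2)⁻¹ - A * (-(2 * b ^ 1) / (b ^ 2) ^ 2)) : ℝ)) : ℂ) := by
    rw [← h3]; ring
  rw [h4, ← Complex.ofReal_neg, Complex.ofReal_inj]
  have hb2 : (b : ℝ) ≠ 0 := hb.ne'
  field_simp
  ring

lemma gfun_eval (d : ℕ) {h : ℝ} (hh : 0 < h) (w : EuclideanSpace ℝ (Fin d)) :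
    gfun d (‖w‖ ^ 2 / 4) (h ^ 2 / 2)
      = (2 * π) ^ ((d : ℝ) / 2) / h ^ d * rexp (-‖w‖ ^ 2 / (2 * h ^ 2)) := by
  rw [gfun]
  have e1 : π / (h ^ 2 / 2) = 2 * π / h ^ 2 := by field_simp
  have e2 : (2 * π / h ^ 2 : ℝ) ^ ((d : ℝ) / 2)
      = (2 * π) ^ ((d : ℝ) / 2) / h ^ d := by
    rw [Real.div_rpow (by positivity) (by positivity)]
    congr 1
    rw [← Real.rpow_natCast h 2, ← Real.rpow_mul hh.le, ← Real.rpow_natCast h d]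
    congr 1
    field_simp
    push_cast; ring
  have e3 : -(‖w‖ ^ 2 / 4 / (h ^ 2 / 2)) = -‖w‖ ^ 2 / (2 * h ^ 2) := by
    field_simp
    ring
  rw [e1, e2, e3]

lemma pow_h_sqrt (d : ℕ) {h : ℝ} (hh : 0 < h) :
    (h * Real.sqrt (2 * π)) ^ d = h ^ d * (2 * π) ^ ((d : ℝ) / 2) := by
  rw [mul_pow]
  congr 1
  rw [Real.sqrt_eq_rpow, ← Real.rpow_natCast ((2 * π) ^ ((1 : ℝ) / 2)) d,
    ← Real.rpow_mul (by positivity)]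
  congr 1
  ring

lemma two_pi_pow (d : ℕ) :
    ((2 * π) ^ d : ℝ) = (2 * π) ^ ((d : ℝ) / 2) * (2 * π) ^ ((d : ℝ) / 2) := by
  rw [← Real.rpow_add (by positivity), ← Real.rpow_natCast (2 * π) d]
  congr 1
  ring

lemma key_formula (d : ℕ) (h θ₀ θ₁ θ₂ : ℝ) (hh : 0 < h) (w : EuclideanSpace ℝ (Fin d)) :
    ∫ k : EuclideanSpace ℝ (Fin d),
        ((θ₀ : ℂ) + (θ₁ : ℂ) * (‖k‖ : ℂ) ^ 2 + (θ₂ : ℂ) * (‖k‖ : ℂ) ^ 4) *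
          Complex.exp (-((h ^ 2 / 2 : ℝ) : ℂ) * ‖k‖ ^ 2 + Complex.I * ((inner ℝ w k : ℝ) : ℂ))
      = (((2 * π) ^ d * QstarGauss d h θ₀ θ₁ θ₂ w : ℝ) : ℂ) := by
  have hb : (0 : ℝ) < h ^ 2 / 2 := by positivity
  have i0 : Integrable (fun k : EuclideanSpace ℝ (Fin d) =>
      Complex.exp (-((h ^ 2 / 2 : ℝ) : ℂ) * ‖k‖ ^ 2 + Complex.I * ((inner ℝ w k : ℝ) : ℂ))) := by
    simpa using integrable_pow_cexp d 0 hb w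
  have i2 := integrable_pow_cexp d 2 hb w
  have i4 := integrable_pow_cexp d 4 hb w
  have e : (fun k : EuclideanSpace ℝ (Fin d) =>
      ((θ₀ : ℂ) + (θ₁ : ℂ) * (‖k‖ : ℂ) ^ 2 + (θ₂ : ℂ) * (‖k‖ : ℂ) ^ 4) *
        Complex.exp (-((h ^ 2 / 2 : ℝ) : ℂ) * ‖k‖ ^ 2 + Complex.I * ((inner ℝ w k : ℝ) : ℂ)))
      = (fun k : EuclideanSpace ℝ (Fin d) =>
        ((θ₀ : ℂ) * Complex.exp (-((h ^ 2 / 2 : ℝ) : ℂ) * ‖k‖ ^ 2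
            + Complex.I * ((inner ℝ w k : ℝ) : ℂ))
          + (θ₁ : ℂ) * ((‖k‖ : ℂ) ^ 2 * Complex.exp (-((h ^ 2 / 2 : ℝ) : ℂ) * ‖k‖ ^ 2
            + Complex.I * ((inner ℝ w k : ℝ) : ℂ))))
          + (θ₂ : ℂ) * ((‖k‖ : ℂ) ^ 4 * Complex.exp (-((h ^ 2 / 2 : ℝ) : ℂ) * ‖k‖ ^ 2
            + Complex.I * ((inner ℝ w k : ℝ) : ℂ)))) := by
    funext k; ring
  have i02 : Integrable (fun k : EuclideanSpace ℝ (Fin d) =>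
      (θ₀ : ℂ) * Complex.exp (-((h ^ 2 / 2 : ℝ) : ℂ) * ‖k‖ ^ 2
          + Complex.I * ((inner ℝ w k : ℝ) : ℂ))
        + (θ₁ : ℂ) * ((‖k‖ : ℂ) ^ 2 * Complex.exp (-((h ^ 2 / 2 : ℝ) : ℂ) * ‖k‖ ^ 2
          + Complex.I * ((inner ℝ w k : ℝ) : ℂ)))) :=
    (i0.const_mul θ₀).add (i2.const_mul θ₁)
  rw [e, integral_add i02 (i4.const_mul θ₂),
    integral_add (i0.const_mul θ₀) (i2.const_mul θ₁),
    integral_const_mul, integral_const_mul, integral_const_mul,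
    M0 d w hb, M2 d w hb, M4 d w hb]
  rw [← Complex.ofReal_mul, ← Complex.ofReal_mul, ← Complex.ofReal_mul,
    ← Complex.ofReal_add, ← Complex.ofReal_add, Complex.ofReal_inj]
  rw [gfun_eval d hh w, QstarGauss, pow_h_sqrt d hh, two_pi_pow d]
  have h1 : (0:ℝ) < (2 * π) ^ ((d : ℝ) / 2) := by positivity
  field_simp
  ring

lemma poly_nonneg {θ₀ θ₁ θ₂ : ℝ}
    (hC : (0 < θ₀ ∧ 0 < θ₁ ∧ 0 < θ₂) ∨
          (0 < θ₀ ∧ 0 < θ₂ ∧ θ₁ < 0 ∧ θ₁ ^ 2 < 4 * θ₀ * θ₂))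
    {t : ℝ} (ht : 0 ≤ t) : 0 ≤ θ₀ + θ₁ * t + θ₂ * t ^ 2 := by
  rcases hC with ⟨h0, h1, h2⟩ | ⟨h0, h2, h1, hD⟩
  · nlinarith
  · nlinarith [sq_nonneg (2 * θ₂ * t + θ₁)]

lemma sum_sum_mul {N : ℕ} (c : ℂ) (f g : Fin N → ℂ) :
    ∑ n : Fin N, ∑ m : Fin N, c * (f n * g m)
      = c * ((∑ n : Fin N, f n) * (∑ m : Fin N, g m)) := by
  rw [Finset.sum_mul_sum, Finset.mul_sum]
  refine Finset.sum_congr rfl fun n _ => ?_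
  rw [Finset.mul_sum]

/-- Under condition C1 or C2 on `(θ₀, θ₁, θ₂)`, the Gaussian
SPH-LAP2 precision function `Q*` yields, at any finite point configuration
`s₁,…,s_N` and for any real weights `x`, a nonnegative quadratic form
`Σₙ Σₘ xₙ xₘ Q*(sₙ − sₘ) ≥ 0`; i.e. the precision matrix `(Q*(sₙ − sₘ))` is
positive semidefinite. -/
theorem sph_lap2_gaussian_precision_psd (d : ℕ) (hd : 1 ≤ d) (h : ℝ) (hh : 0 < h)
    (θ₀ θ₁ θ₂ : ℝ)
    (hC : (0 < θ₀ ∧ 0 < θ₁ ∧ 0 < θ₂) ∨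
          (0 < θ₀ ∧ 0 < θ₂ ∧ θ₁ < 0 ∧ θ₁ ^ 2 < 4 * θ₀ * θ₂))
    (N : ℕ) (s : Fin N → EuclideanSpace ℝ (Fin d)) (x : Fin N → ℝ) :
    0 ≤ ∑ n : Fin N, ∑ m : Fin N, x n * x m * QstarGauss d h θ₀ θ₁ θ₂ (s n - s m) := by
  classical
  have hb : (0 : ℝ) < h ^ 2 / 2 := by positivity
  set P : EuclideanSpace ℝ (Fin d) → ℂ :=
    fun k => (θ₀ : ℂ) + (θ₁ : ℂ) * (‖k‖ : ℂ) ^ 2 + (θ₂ : ℂ) * (‖k‖ : ℂ) ^ 4 with hPdef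
  set T : EuclideanSpace ℝ (Fin d) → ℂ :=
    fun k => ∑ n : Fin N, (x n : ℂ) * Complex.exp (Complex.I * ((inner ℝ (s n) k : ℝ) : ℂ))
    with hTdef
  set R : EuclideanSpace ℝ (Fin d) → ℝ :=
    fun k => ((θ₀ + θ₁ * ‖k‖ ^ 2 + θ₂ * ‖k‖ ^ 4) * rexp (-(h ^ 2 / 2) * ‖k‖ ^ 2)) *
      Complex.normSq (T k) with hRdef
  -- integrability of the pair integrands
  have hInt : ∀ (w : EuclideanSpace ℝ (Fin d)), Integrable (fun k : EuclideanSpace ℝ (Fin d) =>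
      P k * Complex.exp (-((h ^ 2 / 2 : ℝ) : ℂ) * ‖k‖ ^ 2
        + Complex.I * ((inner ℝ w k : ℝ) : ℂ))) := by
    intro w
    have i0 : Integrable (fun k : EuclideanSpace ℝ (Fin d) =>
        Complex.exp (-((h ^ 2 / 2 : ℝ) : ℂ) * ‖k‖ ^ 2
          + Complex.I * ((inner ℝ w k : ℝ) : ℂ))) := by
      simpa using integrable_pow_cexp d 0 hb w
    have i2 := integrable_pow_cexp d 2 hb w
    have i4 := integrable_pow_cexp d 4 hb w
    have e : (fun k : EuclideanSpace ℝ (Fin d) =>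
        P k * Complex.exp (-((h ^ 2 / 2 : ℝ) : ℂ) * ‖k‖ ^ 2
          + Complex.I * ((inner ℝ w k : ℝ) : ℂ)))
        = fun k : EuclideanSpace ℝ (Fin d) =>
          ((θ₀ : ℂ) * Complex.exp (-((h ^ 2 / 2 : ℝ) : ℂ) * ‖k‖ ^ 2
              + Complex.I * ((inner ℝ w k : ℝ) : ℂ))
            + (θ₁ : ℂ) * ((‖k‖ : ℂ) ^ 2 * Complex.exp (-((h ^ 2 / 2 : ℝ) : ℂ) * ‖k‖ ^ 2
              + Complex.I * ((inner ℝ w k : ℝ) : ℂ))))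
            + (θ₂ : ℂ) * ((‖k‖ : ℂ) ^ 4 * Complex.exp (-((h ^ 2 / 2 : ℝ) : ℂ) * ‖k‖ ^ 2
              + Complex.I * ((inner ℝ w k : ℝ) : ℂ))) := by
      funext k; simp only [hPdef]; ring
    rw [e]
    exact ((i0.const_mul θ₀).add (i2.const_mul θ₁)).add (i4.const_mul θ₂)
  -- value of each pair integral
  have step1 : ∀ n m : Fin N,
      ((x n * x m * ((2 * π) ^ d * QstarGauss d h θ₀ θ₁ θ₂ (s n - s m)) : ℝ) : ℂ)
        = ∫ k : EuclideanSpace ℝ (Fin d), ((x n : ℂ) * (x m : ℂ)) *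
            (P k * Complex.exp (-((h ^ 2 / 2 : ℝ) : ℂ) * ‖k‖ ^ 2
              + Complex.I * ((inner ℝ (s n - s m) k : ℝ) : ℂ))) := by
    intro n m
    rw [integral_const_mul, key_formula d h θ₀ θ₁ θ₂ hh (s n - s m)]
    push_cast
    ring
  -- swap sums and integral
  have step2 : ∑ n : Fin N, ∑ m : Fin N,
      ((x n * x m * ((2 * π) ^ d * QstarGauss d h θ₀ θ₁ θ₂ (s n - s m)) : ℝ) : ℂ)
      = ∫ k : EuclideanSpace ℝ (Fin d), ∑ n : Fin N, ∑ m : Fin N, ((x n : ℂ) * (x m : ℂ)) *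
          (P k * Complex.exp (-((h ^ 2 / 2 : ℝ) : ℂ) * ‖k‖ ^ 2
            + Complex.I * ((inner ℝ (s n - s m) k : ℝ) : ℂ))) := by
    rw [integral_finset_sum _ (fun n _ => integrable_finset_sum _
      (fun m _ => (hInt (s n - s m)).const_mul _))]
    refine Finset.sum_congr rfl fun n _ => ?_
    rw [integral_finset_sum _ (fun m _ => (hInt (s n - s m)).const_mul _)]
    exact Finset.sum_congr rfl fun m _ => step1 n m
  -- pointwise identity
  have hpt : ∀ k : EuclideanSpace ℝ (Fin d), ∑ n : Fin N, ∑ m : Fin N,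
      ((x n : ℂ) * (x m : ℂ)) *
        (P k * Complex.exp (-((h ^ 2 / 2 : ℝ) : ℂ) * ‖k‖ ^ 2
          + Complex.I * ((inner ℝ (s n - s m) k : ℝ) : ℂ)))
      = ((R k : ℝ) : ℂ) := by
    intro k
    have hsplit : ∀ a₁ a₂ : ℝ,
        Complex.exp (-((h ^ 2 / 2 : ℝ) : ℂ) * (‖k‖ : ℂ) ^ 2
            + Complex.I * ((a₁ - a₂ : ℝ) : ℂ))
          = Complex.exp (-((h ^ 2 / 2 : ℝ) : ℂ) * (‖k‖ : ℂ) ^ 2) *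
            (Complex.exp (Complex.I * (a₁ : ℂ)) *
              (starRingEnd ℂ) (Complex.exp (Complex.I * (a₂ : ℂ)))) := by
      intro a₁ a₂
      rw [← Complex.exp_conj, ← Complex.exp_add, ← Complex.exp_add]
      congr 1
      rw [map_mul, Complex.conj_I, Complex.conj_ofReal]
      push_cast
      ring
    have e1 : ∀ n m : Fin N, ((x n : ℂ) * (x m : ℂ)) *
        (P k * Complex.exp (-((h ^ 2 / 2 : ℝ) : ℂ) * ‖k‖ ^ 2
          + Complex.I * ((inner ℝ (s n - s m) k : ℝ) : ℂ)))
        = (P k * Complex.exp (-((h ^ 2 / 2 : ℝ) : ℂ) * ‖k‖ ^ 2)) *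
          (((x n : ℂ) * Complex.exp (Complex.I * ((inner ℝ (s n) k : ℝ) : ℂ))) *
            (starRingEnd ℂ) ((x m : ℂ) *
              Complex.exp (Complex.I * ((inner ℝ (s m) k : ℝ) : ℂ)))) := by
      intro n m
      rw [inner_sub_left, hsplit (inner ℝ (s n) k : ℝ) (inner ℝ (s m) k : ℝ),
        map_mul, Complex.conj_ofReal]
      ring
    simp_rw [e1]
    rw [sum_sum_mul]
    have hconjT : ∑ m : Fin N, (starRingEnd ℂ) ((x m : ℂ) *
        Complex.exp (Complex.I * ((inner ℝ (s m) k : ℝ) : ℂ))) = (starRingEnd ℂ) (T k) := by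
      rw [hTdef, map_sum]
    rw [hconjT]
    have hTT : T k * (starRingEnd ℂ) (T k) = ((Complex.normSq (T k) : ℝ) : ℂ) :=
      Complex.mul_conj (T k)
    rw [hTT]
    have hexp : Complex.exp (-((h ^ 2 / 2 : ℝ) : ℂ) * (‖k‖ : ℂ) ^ 2)
        = ((rexp (-(h ^ 2 / 2) * ‖k‖ ^ 2) : ℝ) : ℂ) := by
      rw [Complex.ofReal_exp]
      congr 1
      push_cast
      ring
    rw [hPdef, hexp, hRdef]
    push_cast
    ring
  -- put everything together
  have hfin : ((∑ n : Fin N, ∑ m : Fin N,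
      x n * x m * ((2 * π) ^ d * QstarGauss d h θ₀ θ₁ θ₂ (s n - s m)) : ℝ) : ℂ)
      = ((∫ k : EuclideanSpace ℝ (Fin d), R k : ℝ) : ℂ) := by
    have hc : ((∑ n : Fin N, ∑ m : Fin N,
        x n * x m * ((2 * π) ^ d * QstarGauss d h θ₀ θ₁ θ₂ (s n - s m)) : ℝ) : ℂ)
        = ∑ n : Fin N, ∑ m : Fin N,
          ((x n * x m * ((2 * π) ^ d * QstarGauss d h θ₀ θ₁ θ₂ (s n - s m)) : ℝ) : ℂ) := by
      norm_cast
    rw [hc, step2, integral_congr_ae (Filter.Eventually.of_forall hpt)]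
    exact integral_ofReal
  have heq : ∑ n : Fin N, ∑ m : Fin N,
      x n * x m * ((2 * π) ^ d * QstarGauss d h θ₀ θ₁ θ₂ (s n - s m))
      = ∫ k : EuclideanSpace ℝ (Fin d), R k := by exact_mod_cast hfin
  have hnn : 0 ≤ ∫ k : EuclideanSpace ℝ (Fin d), R k := by
    apply integral_nonneg
    intro k
    have h1 : 0 ≤ θ₀ + θ₁ * ‖k‖ ^ 2 + θ₂ * ‖k‖ ^ 4 := by
      have := poly_nonneg hC (sq_nonneg ‖k‖)
      calc (0:ℝ) ≤ θ₀ + θ₁ * ‖k‖ ^ 2 + θ₂ * (‖k‖ ^ 2) ^ 2 := this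
        _ = θ₀ + θ₁ * ‖k‖ ^ 2 + θ₂ * ‖k‖ ^ 4 := by ring
    exact mul_nonneg (mul_nonneg h1 (Real.exp_pos _).le) (Complex.normSq_nonneg _)
  have heq2 : (2 * π) ^ d * (∑ n : Fin N, ∑ m : Fin N,
      x n * x m * QstarGauss d h θ₀ θ₁ θ₂ (s n - s m))
      = ∫ k : EuclideanSpace ℝ (Fin d), R k := by
    rw [← heq, Finset.mul_sum]
    refine Finset.sum_congr rfl fun n _ => ?_
    rw [Finset.mul_sum]
    exact Finset.sum_congr rfl fun m _ => by ring
  have hpos : (0:ℝ) < (2 * π) ^ d := by positivity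
  by_contra hS
  push_neg at hS
  nlinarith [mul_pos hpos (neg_pos.mpr hS)]
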